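/- Let n ≥ 1, let λ ∈ ℝ, and let φ : ℝ → ℂ be a smooth even function with φ(0) = 1 that satisfies the radial eigenfunction equation of the hyperbolic Laplacian: φ″(r) + 2n·(cosh r/sinh r)·φ′(r) = −(λ² + n²)·φ(r) for all r ≠ 0. Then Dφ equals the Euclidean spherical function: (Dφ)(r) = cos(λr) for all r ∈ ℝ, where D = (1/(2n−1)!!)·∏_{k=1}^{n} (sinh r·(d/dr) + (2k−1)·cosh r), composed with smaller values of k to the left. -/

import Mathlib

/-- The factor `A_k` given by `(A_k g)(r) = sinh r · g'(r) + (2k-1) cosh r · g(r)`. -/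
noncomputable def Ahyp (k : ℕ) (g : ℝ → ℂ) : ℝ → ℂ :=
  fun r => (Real.sinh r : ℂ) * deriv g r + (2 * (k : ℂ) - 1) * (Real.cosh r : ℂ) * g r

/-- `AhypChain n f = A₁(A₂(⋯(Aₙ f)⋯))`, the composition with smaller indices to
the left. -/
noncomputable def AhypChain : ℕ → (ℝ → ℂ) → (ℝ → ℂ)
  | 0, f => f
  | n + 1, f => AhypChain n (Ahyp (n + 1) f)

/-- The shift operator `D = (1/(2n-1)!!) ∏_{k=1}^n (sinh r d/dr + (2k-1) cosh r)`. -/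
noncomputable def Dhyp (n : ℕ) (f : ℝ → ℂ) : ℝ → ℂ :=
  fun r => ((Nat.doubleFactorial (2 * n - 1) : ℂ))⁻¹ * AhypChain n f r

/-! ### Auxiliary lemmas -/

lemma hasDerivAt_sinhC (r : ℝ) :
    HasDerivAt (fun r : ℝ => (Real.sinh r : ℂ)) (Real.cosh r : ℂ) r :=
  (Real.hasDerivAt_sinh r).ofReal_comp

lemma hasDerivAt_coshC (r : ℝ) :
    HasDerivAt (fun r : ℝ => (Real.cosh r : ℂ)) (Real.sinh r : ℂ) r :=
  (Real.hasDerivAt_cosh r).ofReal_comp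

lemma diff_of_contDiff {ψ : ℝ → ℂ} (hψ : ContDiff ℝ (⊤ : ℕ∞) ψ) : Differentiable ℝ ψ :=
  (contDiff_infty_iff_deriv.mp hψ).1

lemma ahyp_contDiff (k : ℕ) {ψ : ℝ → ℂ} (hψ : ContDiff ℝ (⊤ : ℕ∞) ψ) :
    ContDiff ℝ (⊤ : ℕ∞) (Ahyp k ψ) := by
  have hd : ContDiff ℝ (⊤ : ℕ∞) (deriv ψ) := (contDiff_infty_iff_deriv.mp hψ).2
  have hs : ContDiff ℝ (⊤ : ℕ∞) (fun r : ℝ => (Real.sinh r : ℂ)) :=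
    Complex.ofRealCLM.contDiff.comp Real.contDiff_sinh
  have hc : ContDiff ℝ (⊤ : ℕ∞) (fun r : ℝ => (Real.cosh r : ℂ)) :=
    Complex.ofRealCLM.contDiff.comp Real.contDiff_cosh
  exact (hs.mul hd).add ((contDiff_const.mul hc).mul hψ)

lemma ahyp_hasDerivAt (k : ℕ) {ψ : ℝ → ℂ} (hψ : ContDiff ℝ (⊤ : ℕ∞) ψ) (r : ℝ) :
    HasDerivAt (Ahyp k ψ)
      ((Real.cosh r : ℂ) * deriv ψ r + (Real.sinh r : ℂ) * deriv (deriv ψ) r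
        + (2 * (k : ℂ) - 1) * ((Real.sinh r : ℂ) * ψ r + (Real.cosh r : ℂ) * deriv ψ r)) r := by
  have hd : ContDiff ℝ (⊤ : ℕ∞) (deriv ψ) := (contDiff_infty_iff_deriv.mp hψ).2
  have h1 : HasDerivAt (fun r => (Real.sinh r : ℂ) * deriv ψ r)
      ((Real.cosh r : ℂ) * deriv ψ r + (Real.sinh r : ℂ) * deriv (deriv ψ) r) r :=
    (hasDerivAt_sinhC r).mul ((diff_of_contDiff hd r).hasDerivAt)
  have h2 : HasDerivAt (fun r => (2 * (k : ℂ) - 1) * (Real.cosh r : ℂ) * ψ r)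
      ((2 * (k : ℂ) - 1) * ((Real.sinh r : ℂ) * ψ r + (Real.cosh r : ℂ) * deriv ψ r)) r := by
    have := (((hasDerivAt_coshC r).const_mul (2 * (k : ℂ) - 1)).mul
      ((diff_of_contDiff hψ r).hasDerivAt))
    refine this.congr_deriv (Eq.symm ?_)
    ring
  exact h1.add h2

/-- The radial ODE predicate for `H^{2k+1}`. -/
def Esol (lam : ℝ) (k : ℕ) (ψ : ℝ → ℂ) : Prop :=
  ∀ r : ℝ, r ≠ 0 →
    deriv (deriv ψ) r + 2 * (k : ℂ) * ((Real.cosh r : ℂ) / (Real.sinh r : ℂ)) * deriv ψ r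
      = -(((lam : ℂ)) ^ 2 + (k : ℂ) ^ 2) * ψ r

lemma sinhC_ne_zero {r : ℝ} (hr : r ≠ 0) : (Real.sinh r : ℂ) ≠ 0 := by
  exact_mod_cast Real.sinh_ne_zero.mpr hr

/-- First derivative of `Ahyp (k+1) ψ` off the origin, using the ODE. -/
lemma ahyp_deriv_eq (lam : ℝ) (k : ℕ) {ψ : ℝ → ℂ} (hψ : ContDiff ℝ (⊤ : ℕ∞) ψ)
    (hode : Esol lam (k + 1) ψ) {r : ℝ} (hr : r ≠ 0) :
    deriv (Ahyp (k + 1) ψ) r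
      = -(((lam : ℂ)) ^ 2 + (k : ℂ) ^ 2) * ((Real.sinh r : ℂ) * ψ r) := by
  have hS : (Real.sinh r : ℂ) ≠ 0 := sinhC_ne_zero hr
  have h1 := (ahyp_hasDerivAt (k + 1) hψ r).deriv
  have h2 := hode r hr
  rw [h1]
  have h3 : deriv (deriv ψ) r
      = -(((lam : ℂ)) ^ 2 + ((k : ℕ) + 1 : ℂ) ^ 2) * ψ r
        - 2 * ((k : ℕ) + 1 : ℂ) * ((Real.cosh r : ℂ) / (Real.sinh r : ℂ)) * deriv ψ r := by
    push_cast at h2 ⊢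
    linear_combination h2
  rw [h3]
  have hS' : Complex.sinh (r : ℂ) ≠ 0 := by rw [← Complex.ofReal_sinh]; exact hS
  push_cast
  field_simp [hS']
  ring

/-- `A_{k+1}` shifts solutions of the `(k+1)`-ODE to solutions of the `k`-ODE. -/
lemma esol_step (lam : ℝ) (k : ℕ) {ψ : ℝ → ℂ} (hψ : ContDiff ℝ (⊤ : ℕ∞) ψ)
    (hode : Esol lam (k + 1) ψ) : Esol lam k (Ahyp (k + 1) ψ) := by
  intro r hr
  have hS : (Real.sinh r : ℂ) ≠ 0 := sinhC_ne_zero hr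
  set C : ℂ := -(((lam : ℂ)) ^ 2 + (k : ℂ) ^ 2) with hC
  have hev : deriv (Ahyp (k + 1) ψ) =ᶠ[nhds r] fun x => C * ((Real.sinh x : ℂ) * ψ x) := by
    filter_upwards [isOpen_compl_singleton.mem_nhds (by simpa using hr :
      r ∈ ({(0 : ℝ)}ᶜ : Set ℝ))] with x hx
    exact ahyp_deriv_eq lam k hψ hode hx
  have hD2 : deriv (deriv (Ahyp (k + 1) ψ)) r
      = C * ((Real.cosh r : ℂ) * ψ r + (Real.sinh r : ℂ) * deriv ψ r) := by
    rw [Filter.EventuallyEq.deriv_eq hev]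
    have : HasDerivAt (fun x : ℝ => C * ((Real.sinh x : ℂ) * ψ x))
        (C * ((Real.cosh r : ℂ) * ψ r + (Real.sinh r : ℂ) * deriv ψ r)) r :=
      ((hasDerivAt_sinhC r).mul ((diff_of_contDiff hψ r).hasDerivAt)).const_mul C
    exact this.deriv
  rw [hD2, ahyp_deriv_eq lam k hψ hode hr]
  show _ = C * Ahyp (k + 1) ψ r
  simp only [Ahyp]
  have hS' : Complex.sinh (r : ℂ) ≠ 0 := by rw [← Complex.ofReal_sinh]; exact hS
  push_cast
  field_simp [hS']
  ring

lemma chain_contDiff : ∀ (m : ℕ) {ψ : ℝ → ℂ}, ContDiff ℝ (⊤ : ℕ∞) ψ →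
    ContDiff ℝ (⊤ : ℕ∞) (AhypChain m ψ)
  | 0, _, h => h
  | (m + 1), _, h => chain_contDiff m (ahyp_contDiff (m + 1) h)

lemma chain_ode (lam : ℝ) : ∀ (m : ℕ) {ψ : ℝ → ℂ}, ContDiff ℝ (⊤ : ℕ∞) ψ → Esol lam m ψ →
    ∀ r : ℝ, r ≠ 0 →
      deriv (deriv (AhypChain m ψ)) r = -((lam : ℂ)) ^ 2 * AhypChain m ψ r := by
  intro m
  induction m with
  | zero =>
    intro ψ hψ hE r hr
    have := hE r hr
    simp only [AhypChain]
    simpa using this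
  | succ m ih =>
    intro ψ hψ hE r hr
    simp only [AhypChain]
    exact ih (ahyp_contDiff (m + 1) hψ) (esol_step lam m hψ hE) r hr

lemma deriv_even_neg {ψ : ℝ → ℂ} (h : ∀ r, ψ (-r) = ψ r) (r : ℝ) :
    deriv ψ (-r) = -deriv ψ r := by
  have hfun : (fun x : ℝ => ψ (-x)) = ψ := funext h
  have h2 := deriv_comp_neg ψ r
  rw [hfun] at h2
  linear_combination h2

lemma ahyp_even (k : ℕ) {ψ : ℝ → ℂ} (h : ∀ r, ψ (-r) = ψ r) (r : ℝ) :
    Ahyp k ψ (-r) = Ahyp k ψ r := by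
  simp only [Ahyp, Real.sinh_neg, Real.cosh_neg, deriv_even_neg h, h]
  push_cast
  ring

lemma chain_even : ∀ (m : ℕ) {ψ : ℝ → ℂ}, (∀ r, ψ (-r) = ψ r) →
    ∀ r, AhypChain m ψ (-r) = AhypChain m ψ r
  | 0, _, h => h
  | (m + 1), _, h => chain_even m (ahyp_even (m + 1) h)

lemma deriv_even_zero {ψ : ℝ → ℂ} (h : ∀ r, ψ (-r) = ψ r) : deriv ψ 0 = 0 := by
  have h1 : deriv ψ 0 = -deriv ψ 0 := by simpa using deriv_even_neg h 0
  linear_combination h1 / 2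

lemma ahyp_zero (k : ℕ) (ψ : ℝ → ℂ) : Ahyp k ψ 0 = (2 * (k : ℂ) - 1) * ψ 0 := by
  simp [Ahyp]

lemma chain_zero : ∀ (m : ℕ) (ψ : ℝ → ℂ),
    AhypChain m ψ 0 = ((Nat.doubleFactorial (2 * m - 1) : ℕ) : ℂ) * ψ 0 := by
  intro m
  induction m with
  | zero => intro ψ; simp [AhypChain, Nat.doubleFactorial]
  | succ m ih =>
    intro ψ
    simp only [AhypChain]
    rw [ih, ahyp_zero]
    have hnat : Nat.doubleFactorial (2 * (m + 1) - 1)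
        = (2 * m + 1) * Nat.doubleFactorial (2 * m - 1) := by
      rcases m with _ | j
      · simp [Nat.doubleFactorial]
      · have h1 : 2 * (j + 1 + 1) - 1 = (2 * (j + 1) - 1) + 2 := by omega
        rw [h1, Nat.doubleFactorial_add_two]
        have h2 : (2 * (j + 1) - 1) + 2 = 2 * (j + 1) + 1 := by omega
        rw [h2]
    rw [hnat]
    push_cast
    ring

/-- Uniqueness: a global solution of `f'' = -λ² f` with `f'(0) = 0` is `f 0 · cos (λ r)`. -/
lemma cos_sol (lam : ℝ) {f : ℝ → ℂ} (hf : ContDiff ℝ (⊤ : ℕ∞) f)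
    (hode : ∀ r : ℝ, deriv (deriv f) r = -((lam : ℂ)) ^ 2 * f r) (hd0 : deriv f 0 = 0)
    (r : ℝ) : f r = f 0 * (Real.cos (lam * r) : ℂ) := by
  have hd : ContDiff ℝ (⊤ : ℕ∞) (deriv f) := (contDiff_infty_iff_deriv.mp hf).2
  have hdf : Differentiable ℝ f := diff_of_contDiff hf
  have hdf' : Differentiable ℝ (deriv f) := diff_of_contDiff hd
  set c := f 0 with hc
  have hcos : ∀ x : ℝ, HasDerivAt (fun r : ℝ => (Real.cos (lam * r) : ℂ))
      (-(lam : ℂ) * (Real.sin (lam * x) : ℂ)) x := by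
    intro x
    have hi : HasDerivAt (fun r : ℝ => lam * r) lam x := by
      simpa using (hasDerivAt_id x).const_mul lam
    have := ((Real.hasDerivAt_cos (lam * x)).comp x hi).ofReal_comp
    refine this.congr_deriv (Eq.symm ?_)
    push_cast
    ring
  have hsin : ∀ x : ℝ, HasDerivAt (fun r : ℝ => (Real.sin (lam * r) : ℂ))
      ((lam : ℂ) * (Real.cos (lam * x) : ℂ)) x := by
    intro x
    have hi : HasDerivAt (fun r : ℝ => lam * r) lam x := by
      simpa using (hasDerivAt_id x).const_mul lam
    have := ((Real.hasDerivAt_sin (lam * x)).comp x hi).ofReal_comp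
    refine this.congr_deriv (Eq.symm ?_)
    push_cast
    ring
  have hexp : ∀ (a : ℂ) (x : ℝ),
      HasDerivAt (fun r : ℝ => Complex.exp (a * r)) (a * Complex.exp (a * x)) x := by
    intro a x
    have h1 : HasDerivAt (fun r : ℝ => a * (r : ℂ)) a x := by
      simpa using (Complex.ofRealCLM.hasDerivAt (x := x)).const_mul a
    have := h1.cexp
    convert this using 1
    ring
  set g : ℝ → ℂ := fun r => f r - c * (Real.cos (lam * r) : ℂ) with hgdef
  set g' : ℝ → ℂ := fun r => deriv f r + c * lam * (Real.sin (lam * r) : ℂ) with hg'def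
  have hg : ∀ x, HasDerivAt g (g' x) x := by
    intro x
    have := (hdf x).hasDerivAt.sub ((hcos x).const_mul c)
    refine this.congr_deriv (Eq.symm ?_)
    simp only [hg'def]
    ring
  have hg' : ∀ x, HasDerivAt g' (-((lam : ℂ)) ^ 2 * g x) x := by
    intro x
    have := (hdf' x).hasDerivAt.add ((hsin x).const_mul (c * lam))
    refine this.congr_deriv (Eq.symm ?_)
    rw [hode x]
    simp only [hgdef]
    push_cast
    ring
  set u : ℝ → ℂ := fun x => g' x - Complex.I * lam * g x with hu
  have hu' : ∀ x, HasDerivAt u (-(Complex.I * lam) * u x) x := by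
    intro x
    have := (hg' x).sub ((hg x).const_mul (Complex.I * lam))
    refine this.congr_deriv (Eq.symm ?_)
    simp only [hu]
    linear_combination ((lam : ℂ)) ^ 2 * g x * Complex.I_sq
  have hp : ∀ x, HasDerivAt (fun x : ℝ => u x * Complex.exp (Complex.I * lam * x)) 0 x := by
    intro x
    have := (hu' x).mul (hexp (Complex.I * lam) x)
    refine this.congr_deriv (Eq.symm ?_)
    ring
  have hpc : ∀ x : ℝ, u x * Complex.exp (Complex.I * lam * x)
      = u 0 * Complex.exp (Complex.I * lam * 0) :=
    fun x => is_const_of_deriv_eq_zero (fun y => (hp y).differentiableAt)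
      (fun y => (hp y).deriv) x 0
  have hu0 : u 0 = 0 := by
    simp [hu, hg'def, hgdef, hd0, hc]
  have huz : ∀ x, u x = 0 := by
    intro x
    have h1 := hpc x
    rw [hu0, zero_mul] at h1
    exact (mul_eq_zero.mp h1).resolve_right (Complex.exp_ne_zero _)
  have hq : ∀ x, HasDerivAt (fun x : ℝ => g x * Complex.exp (-(Complex.I * lam) * x)) 0 x := by
    intro x
    have hgx : g' x = Complex.I * lam * g x := by
      have h2 := huz x
      simp only [hu] at h2
      linear_combination h2
    have := (hg x).mul (hexp (-(Complex.I * lam)) x)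
    refine this.congr_deriv (Eq.symm ?_)
    rw [hgx]
    ring
  have hqc : ∀ x : ℝ, g x * Complex.exp (-(Complex.I * lam) * x)
      = g 0 * Complex.exp (-(Complex.I * lam) * 0) :=
    fun x => is_const_of_deriv_eq_zero (fun y => (hq y).differentiableAt)
      (fun y => (hq y).deriv) x 0
  have hg0 : g 0 = 0 := by simp [hgdef, hc]
  have hgr : g r = 0 := by
    have h1 := hqc r
    rw [hg0, zero_mul] at h1
    exact (mul_eq_zero.mp h1).resolve_right (Complex.exp_ne_zero _)
  simp only [hgdef] at hgr
  linear_combination hgr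

/-- `D` maps the spherical function `φ_λ` of `H^{2n+1}` to `cos (λ r)`. -/
theorem stmt_10 (n : ℕ) (hn : 1 ≤ n) (lam : ℝ) (φ : ℝ → ℂ)
    (hφ : ContDiff ℝ (⊤ : ℕ∞) φ) (heven : ∀ r : ℝ, φ (-r) = φ r) (h0 : φ 0 = 1)
    (hode : ∀ r : ℝ, r ≠ 0 →
      deriv (deriv φ) r + 2 * (n : ℂ) * ((Real.cosh r : ℂ) / (Real.sinh r : ℂ)) * deriv φ r
        = -(((lam : ℂ)) ^ 2 + (n : ℂ) ^ 2) * φ r) :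
    ∀ r : ℝ, Dhyp n φ r = (Real.cos (lam * r) : ℂ) := by
  intro r
  have hch : ContDiff ℝ (⊤ : ℕ∞) (AhypChain n φ) := chain_contDiff n hφ
  have hE : Esol lam n φ := hode
  have hode2 : ∀ x : ℝ,
      deriv (deriv (AhypChain n φ)) x = -((lam : ℂ)) ^ 2 * AhypChain n φ x := by
    have hd1 : Continuous (deriv (deriv (AhypChain n φ))) :=
      ((contDiff_infty_iff_deriv.mp ((contDiff_infty_iff_deriv.mp hch).2)).2).continuous
    have hd2 : Continuous (fun x : ℝ => -((lam : ℂ)) ^ 2 * AhypChain n φ x) :=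
      continuous_const.mul hch.continuous
    have heq := Continuous.ext_on (dense_compl_singleton (0 : ℝ)) hd1 hd2
      (fun x hx => chain_ode lam n hφ hE x (by simpa using hx))
    exact fun x => congrFun heq x
  have heven2 : ∀ x, AhypChain n φ (-x) = AhypChain n φ x := chain_even n heven
  have hd0 : deriv (AhypChain n φ) 0 = 0 := deriv_even_zero heven2
  have hval : AhypChain n φ 0 = ((Nat.doubleFactorial (2 * n - 1) : ℕ) : ℂ) := by
    rw [chain_zero n φ, h0, mul_one]
  have hmain := cos_sol lam hch hode2 hd0 r
  rw [hval] at hmain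
  simp only [Dhyp]
  rw [hmain, ← mul_assoc, inv_mul_cancel₀, one_mul]
  exact Nat.cast_ne_zero.mpr (Nat.doubleFactorial_pos _).ne'
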